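/- Let (Ω, η) be a probability space and f : Ω → (0, ∞) a measurable function. Suppose there are constants δ₀ > 0, I₀ < ∞, L₀ > 0 such that ∫ (f^{δ₀} + f^{−δ₀}) dη ≤ I₀ and ∫ log f dη ≥ L₀. Then there exists δ₁ > 0, depending only on (δ₀, I₀, L₀), such that for every 0 < δ ≤ δ₁ one has ∫ f^{−δ} dη ≤ 1 − (δ/2)·L₀ < 1. -/

import Mathlib

open MeasureTheory

lemma exp_quad (x : ℝ) : Real.exp x ≤ 1 + x + x ^ 2 * Real.exp |x| := by
  have h1 : (1 - x) * Real.exp x ≤ 1 := by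
    have := Real.add_one_le_exp (-x)
    have he : Real.exp (-x) * Real.exp x = 1 := by
      rw [← Real.exp_add]; simp
    nlinarith [Real.exp_pos x]
  have h2 : x + 1 ≤ Real.exp x := Real.add_one_le_exp x
  rcases le_or_gt 0 x with hx | hx
  · rw [abs_of_nonneg hx]
    nlinarith [Real.exp_pos x]
  · rw [abs_of_neg hx]
    have h3 : 1 ≤ Real.exp (-x) := by
      rw [Real.one_le_exp_iff]; linarith
    nlinarith [Real.exp_pos x, sq_nonneg x]

lemma sq_le_four_exp (s : ℝ) (hs : 0 ≤ s) : s ^ 2 ≤ 4 * Real.exp s := by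
  have h := Real.add_one_le_exp (s / 2)
  have : (s / 2 + 1) ^ 2 ≤ Real.exp s := by
    have hp : 0 ≤ s / 2 + 1 := by linarith
    calc (s / 2 + 1) ^ 2 ≤ Real.exp (s / 2) ^ 2 := by nlinarith [Real.exp_pos (s/2)]
    _ = Real.exp s := by rw [sq, ← Real.exp_add]; ring_nf
  nlinarith

lemma key_pointwise (δ₀ : ℝ) (hδ₀ : 0 < δ₀) (y : ℝ) (hy : 0 < y)
    (δ : ℝ) (hδ : 0 < δ) (hδle : δ ≤ δ₀ / 2) :
    y ^ (-δ) ≤ 1 - δ * Real.log y + δ ^ 2 * (16 / δ₀ ^ 2) * (y ^ δ₀ + y ^ (-δ₀)) := by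
  set t := Real.log y with ht
  have hr : y ^ (-δ) = Real.exp (t * -δ) := by
    rw [Real.rpow_def_of_pos hy]
  have h1 := exp_quad (t * -δ)
  have habs : |t * -δ| = δ * |t| := by
    rw [abs_mul, abs_neg, abs_of_pos hδ]; ring
  -- bound the quadratic term
  have hA : Real.exp (δ * |t|) ≤ Real.exp (δ₀ / 2 * |t|) :=
    Real.exp_le_exp.mpr (by nlinarith [abs_nonneg t])
  have hB : t ^ 2 ≤ 16 / δ₀ ^ 2 * Real.exp (δ₀ / 2 * |t|) := by
    have h := sq_le_four_exp (δ₀ / 2 * |t|) (by positivity)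
    have h2 : (δ₀ / 2 * |t|) ^ 2 = δ₀ ^ 2 / 4 * t ^ 2 := by
      rw [mul_pow, sq_abs]; ring
    rw [h2] at h
    have hδ₀2 : 0 < δ₀ ^ 2 := by positivity
    rw [div_mul_eq_mul_div, le_div_iff₀ hδ₀2]
    nlinarith
  have hC : Real.exp (δ₀ * |t|) ≤ y ^ δ₀ + y ^ (-δ₀) := by
    rcases le_or_gt 0 t with h | h
    · rw [abs_of_nonneg h]
      have : Real.exp (δ₀ * t) = y ^ δ₀ := by
        rw [Real.rpow_def_of_pos hy, mul_comm]
      rw [this]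
      have : 0 < y ^ (-δ₀) := Real.rpow_pos_of_pos hy _
      linarith
    · rw [abs_of_neg h]
      have : Real.exp (δ₀ * -t) = y ^ (-δ₀) := by
        rw [Real.rpow_def_of_pos hy]; ring_nf; rfl
      rw [this]
      have : 0 < y ^ δ₀ := Real.rpow_pos_of_pos hy _
      linarith
  have hquad : (t * -δ) ^ 2 * Real.exp |t * -δ| ≤
      δ ^ 2 * (16 / δ₀ ^ 2) * (y ^ δ₀ + y ^ (-δ₀)) := by
    rw [habs]
    have e1 : (t * -δ) ^ 2 = δ ^ 2 * t ^ 2 := by ring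
    rw [e1]
    calc δ ^ 2 * t ^ 2 * Real.exp (δ * |t|)
        ≤ δ ^ 2 * (16 / δ₀ ^ 2 * Real.exp (δ₀ / 2 * |t|)) * Real.exp (δ₀ / 2 * |t|) := by
          have := mul_le_mul hB hA (Real.exp_pos _).le (by positivity)
          nlinarith [sq_nonneg δ]
      _ = δ ^ 2 * (16 / δ₀ ^ 2) * (Real.exp (δ₀ / 2 * |t|) * Real.exp (δ₀ / 2 * |t|)) := by
          ring
      _ = δ ^ 2 * (16 / δ₀ ^ 2) * Real.exp (δ₀ * |t|) := by
          rw [← Real.exp_add]; ring_nf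
      _ ≤ δ ^ 2 * (16 / δ₀ ^ 2) * (y ^ δ₀ + y ^ (-δ₀)) := by
          have : (0:ℝ) ≤ δ ^ 2 * (16 / δ₀ ^ 2) := by positivity
          exact mul_le_mul_of_nonneg_left hC this
  rw [hr]
  calc Real.exp (t * -δ) ≤ 1 + t * -δ + (t * -δ) ^ 2 * Real.exp |t * -δ| := h1
    _ ≤ 1 - δ * t + δ ^ 2 * (16 / δ₀ ^ 2) * (y ^ δ₀ + y ^ (-δ₀)) := by
        have := hquad; linarith [hquad]

lemma dominate (δ₀ : ℝ) (hδ₀ : 0 < δ₀) (y : ℝ) (hy : 0 < y)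
    (δ : ℝ) (hδ : 0 < δ) (hδle : δ ≤ δ₀) :
    y ^ (-δ) ≤ y ^ δ₀ + y ^ (-δ₀) := by
  set t := Real.log y
  have hr : y ^ (-δ) = Real.exp (t * -δ) := by rw [Real.rpow_def_of_pos hy]
  rw [hr]
  have h1 : t * -δ ≤ δ₀ * |t| := by
    rcases le_or_gt 0 t with h | h
    · nlinarith [abs_of_nonneg h, abs_nonneg t]
    · rw [abs_of_neg h]; nlinarith
  have hC : Real.exp (δ₀ * |t|) ≤ y ^ δ₀ + y ^ (-δ₀) := by
    rcases le_or_gt 0 t with h | h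
    · rw [abs_of_nonneg h]
      have e : Real.exp (δ₀ * t) = y ^ δ₀ := by
        rw [Real.rpow_def_of_pos hy, mul_comm]
      rw [e]
      linarith [Real.rpow_pos_of_pos hy (-δ₀)]
    · rw [abs_of_neg h]
      have e : Real.exp (δ₀ * -t) = y ^ (-δ₀) := by
        rw [Real.rpow_def_of_pos hy]; ring_nf; rfl
      rw [e]
      linarith [Real.rpow_pos_of_pos hy δ₀]
  exact le_trans (Real.exp_le_exp.mpr h1) hC

theorem uniform_contraction_estimate {Ω : Type*} [MeasurableSpace Ω]
    (η : Measure Ω) [IsProbabilityMeasure η]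
    (f : Ω → ℝ) (hf : Measurable f) (hfpos : ∀ ω, 0 < f ω)
    (δ₀ I₀ L₀ : ℝ) (hδ₀ : 0 < δ₀) (hL₀ : 0 < L₀)
    (hint : Integrable (fun ω => f ω ^ δ₀ + f ω ^ (-δ₀)) η)
    (hI : (∫ ω, (f ω ^ δ₀ + f ω ^ (-δ₀)) ∂η) ≤ I₀)
    (hlogint : Integrable (fun ω => Real.log (f ω)) η)
    (hL : L₀ ≤ ∫ ω, Real.log (f ω) ∂η) :
    ∃ δ₁ > 0, ∀ δ : ℝ, 0 < δ → δ ≤ δ₁ →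
      (∫ ω, f ω ^ (-δ) ∂η) ≤ 1 - δ / 2 * L₀ ∧ 1 - δ / 2 * L₀ < 1 := by
  set C : ℝ := 16 / δ₀ ^ 2 with hC
  have hCpos : 0 < C := by positivity
  set M : ℝ := max I₀ 1 with hM
  have hMpos : 0 < M := lt_of_lt_of_le one_pos (le_max_right _ _)
  refine ⟨min (δ₀ / 2) (L₀ / (2 * C * M)), lt_min (by positivity) (by positivity), ?_⟩
  intro δ hδ hδle
  have hδle1 : δ ≤ δ₀ / 2 := le_trans hδle (min_le_left _ _)
  have hδle2 : δ ≤ L₀ / (2 * C * M) := le_trans hδle (min_le_right _ _)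
  constructor
  · -- main estimate
    have hpt : ∀ ω, f ω ^ (-δ) ≤
        1 - δ * Real.log (f ω) + δ ^ 2 * C * (f ω ^ δ₀ + f ω ^ (-δ₀)) :=
      fun ω => key_pointwise δ₀ hδ₀ (f ω) (hfpos ω) δ hδ hδle1
    have hmeas : AEStronglyMeasurable (fun ω => f ω ^ (-δ)) η := by
      have he : (fun ω => f ω ^ (-δ)) = fun ω => Real.exp (Real.log (f ω) * (-δ)) :=
        funext fun ω => Real.rpow_def_of_pos (hfpos ω) _
      rw [he]
      exact ((hf.log.mul_const _).exp).aestronglyMeasurable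
    have hintl : Integrable (fun ω => f ω ^ (-δ)) η := by
      refine hint.mono' hmeas (Filter.Eventually.of_forall fun ω => ?_)
      rw [Real.norm_eq_abs, abs_of_nonneg (Real.rpow_nonneg (hfpos ω).le _)]
      exact dominate δ₀ hδ₀ (f ω) (hfpos ω) δ hδ (by linarith)
    have ha : Integrable (fun ω => 1 - δ * Real.log (f ω)) η :=
      (integrable_const 1).sub (hlogint.const_mul δ)
    have hb : Integrable (fun ω => δ ^ 2 * C * (f ω ^ δ₀ + f ω ^ (-δ₀))) η :=
      hint.const_mul _
    have hintr : Integrable (fun ω =>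
        1 - δ * Real.log (f ω) + δ ^ 2 * C * (f ω ^ δ₀ + f ω ^ (-δ₀))) η := ha.add hb
    have h1 : (∫ ω, f ω ^ (-δ) ∂η) ≤
        ∫ ω, (1 - δ * Real.log (f ω) + δ ^ 2 * C * (f ω ^ δ₀ + f ω ^ (-δ₀))) ∂η :=
      integral_mono hintl hintr hpt
    have h2 : (∫ ω, (1 - δ * Real.log (f ω) + δ ^ 2 * C * (f ω ^ δ₀ + f ω ^ (-δ₀))) ∂η)
        = 1 - δ * (∫ ω, Real.log (f ω) ∂η)
          + δ ^ 2 * C * (∫ ω, (f ω ^ δ₀ + f ω ^ (-δ₀)) ∂η) := by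
      rw [integral_add ha hb,
        integral_sub (integrable_const 1) (hlogint.const_mul δ),
        integral_const_mul, integral_const_mul, integral_const]
      simp
    rw [h2] at h1
    have h3 : δ ^ 2 * C * (∫ ω, (f ω ^ δ₀ + f ω ^ (-δ₀)) ∂η) ≤ δ ^ 2 * C * M := by
      have : (∫ ω, (f ω ^ δ₀ + f ω ^ (-δ₀)) ∂η) ≤ M := le_trans hI (le_max_left _ _)
      exact mul_le_mul_of_nonneg_left this (by positivity)
    have h4 : δ * (2 * C * M) ≤ L₀ := by
      rw [le_div_iff₀ (by positivity)] at hδle2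
      linarith [hδle2]
    have h5 : δ ^ 2 * C * M ≤ δ / 2 * L₀ := by nlinarith
    have h6 : δ * L₀ ≤ δ * (∫ ω, Real.log (f ω) ∂η) :=
      mul_le_mul_of_nonneg_left hL hδ.le
    linarith
  · nlinarith
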